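/- (Lemma 3.1 at the level of the transformed coefficient matrix, with geometric constants.) Let J be an invertible 2×2 real matrix, r, s ∈ ℝ², and let φ(x) := J(x − r) + s. Let T' ⊆ ℝ² be Lebesgue measurable with T := φ(T'). Suppose there are ρ, ρ', κ, κ' > 0 and centers such that: a closed ball of radius ρ is contained in T and the diameter of T is at most κ; a closed ball of radius ρ' is contained in T' and the diameter of T' is at most κ'. Let a be a symmetric 2×2 real matrix with a_min ‖x‖² ≤ xᵀ a x ≤ a_max ‖x‖² for all x ∈ ℝ², where a_max ≥ a_min ≥ 0. Define A := |det J|⁻¹ · J a Jᵀ. Then for all v, w ∈ ℝ²: |vᵀ A w| ≤ a_max ( κ κ' / (ρ ρ') )² ‖v‖ ‖w‖, and vᵀ A v ≥ a_min ( ρ ρ' / (κ κ') )² ‖v‖². -/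

import Mathlib

open Matrix MeasureTheory

/-- The bilinear pairing `vᵀ a w` on Euclidean `ℝ²`. -/
noncomputable def matQuad (a : Matrix (Fin 2) (Fin 2) ℝ)
    (v w : EuclideanSpace ℝ (Fin 2)) : ℝ :=
  inner ℝ v (Matrix.toEuclideanLin a w)

section helpers
local notation "E2" => EuclideanSpace ℝ (Fin 2)

/-- Geometric bound: if a ball of radius `ρ` sits inside `T'`, and the affine image
`f x + t` of `T'` lands in a set `T` of diameter ≤ κ, then `‖f x‖ ≤ κ/(2ρ) ‖x‖`. -/
lemma aux_norm_bound (f : E2 →ₗ[ℝ] E2) (t c : E2) (ρ κ : ℝ) (hρ : 0 < ρ) (hκ : 0 ≤ κ)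
    (T' T : Set E2) (hball : Metric.closedBall c ρ ⊆ T')
    (himg : ∀ x ∈ T', f x + t ∈ T) (hdiam : EMetric.diam T ≤ ENNReal.ofReal κ) :
    ∀ x : E2, ‖f x‖ ≤ κ / (2 * ρ) * ‖x‖ := by
  intro x
  rcases eq_or_ne x 0 with h | h
  · simp [h]
  have hnx : (0:ℝ) < ‖x‖ := norm_pos_iff.mpr h
  set u : E2 := (ρ / ‖x‖) • x with hu_def
  have hu : ‖u‖ = ρ := by
    rw [hu_def, norm_smul, Real.norm_eq_abs, abs_of_pos (by positivity),
      div_mul_cancel₀ _ (ne_of_gt hnx)]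
  have h1 : c + u ∈ T' := hball (by
    simp [Metric.mem_closedBall, dist_eq_norm, add_sub_cancel_left, hu])
  have h2 : c - u ∈ T' := hball (by
    simp only [Metric.mem_closedBall, dist_eq_norm]
    have h5 : c - u - c = -u := by abel
    rw [h5, norm_neg, hu])
  have hp := himg _ h1
  have hq := himg _ h2
  have hdist : dist (f (c + u) + t) (f (c - u) + t) ≤ κ := by
    have h3 := EMetric.edist_le_diam_of_mem hp hq
    rw [edist_dist] at h3
    exact (ENNReal.ofReal_le_ofReal_iff hκ).mp (le_trans h3 hdiam)
  have hde : dist (f (c + u) + t) (f (c - u) + t) = 2 * ‖f u‖ := by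
    rw [dist_eq_norm]
    have h4 : (f (c + u) + t) - (f (c - u) + t) = f u + f u := by
      rw [map_add, map_sub]; abel
    rw [h4, ← two_smul ℝ, norm_smul]
    simp
  have hfu : ‖f u‖ = ρ / ‖x‖ * ‖f x‖ := by
    rw [hu_def, LinearMap.map_smul, norm_smul, Real.norm_eq_abs, abs_of_pos (by positivity)]
  rw [hde, hfu] at hdist
  rw [div_mul_eq_mul_div, le_div_iff₀ (by positivity)]
  have := mul_le_mul_of_nonneg_right hdist hnx.le
  calc ‖f x‖ * (2 * ρ) = 2 * (ρ / ‖x‖ * ‖f x‖) * ‖x‖ := by field_simp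
    _ ≤ κ * ‖x‖ := this

lemma aux_mul_apply (M N : Matrix (Fin 2) (Fin 2) ℝ) (x : E2) :
    toEuclideanLin (M * N) x = toEuclideanLin M (toEuclideanLin N x) := by
  simp [Matrix.toEuclideanLin_apply, Matrix.mulVec_mulVec]

lemma aux_inner_transpose (M : Matrix (Fin 2) (Fin 2) ℝ) (x y : E2) :
    inner ℝ (toEuclideanLin Mᵀ x) y = (inner ℝ x (toEuclideanLin M y) : ℝ) := by
  rw [← Matrix.conjTranspose_eq_transpose_of_trivial,
    Matrix.toEuclideanLin_conjTranspose_eq_adjoint, LinearMap.adjoint_inner_left]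

lemma aux_coord_le (x : E2) (i : Fin 2) : |x i| ≤ ‖x‖ := by
  rw [EuclideanSpace.norm_eq, ← Real.sqrt_sq_eq_abs]
  apply Real.sqrt_le_sqrt
  calc x i ^ 2 = ‖x i‖ ^ 2 := by rw [Real.norm_eq_abs, sq_abs]
    _ ≤ ∑ j, ‖x j‖ ^ 2 := Finset.single_le_sum (f := fun j => ‖x j‖ ^ 2) (fun j _ => sq_nonneg _) (Finset.mem_univ i)

lemma aux_entry_le (M : Matrix (Fin 2) (Fin 2) ℝ) (C : ℝ)
    (h : ∀ x : E2, ‖toEuclideanLin M x‖ ≤ C * ‖x‖) (i j : Fin 2) : |M i j| ≤ C := by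
  have he : toEuclideanLin M (EuclideanSpace.single j 1) i = M i j := by
    rw [Matrix.toEuclideanLin_apply]
    show (M *ᵥ (WithLp.equiv 2 _) (EuclideanSpace.single j 1)) i = M i j
    simp [Matrix.mulVec_single]
  calc |M i j| = |toEuclideanLin M (EuclideanSpace.single j 1) i| := by rw [he]
    _ ≤ ‖toEuclideanLin M (EuclideanSpace.single j 1)‖ := aux_coord_le _ _
    _ ≤ C * ‖(EuclideanSpace.single j 1 : E2)‖ := h _
    _ = C := by rw [EuclideanSpace.norm_single]; simp

lemma aux_transpose_bound (M : Matrix (Fin 2) (Fin 2) ℝ) (C : ℝ) (hC : 0 ≤ C)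
    (h : ∀ x : E2, ‖toEuclideanLin M x‖ ≤ C * ‖x‖) :
    ∀ x : E2, ‖toEuclideanLin Mᵀ x‖ ≤ C * ‖x‖ := by
  intro x
  set y : E2 := toEuclideanLin Mᵀ x with hy
  rcases eq_or_lt_of_le (norm_nonneg y) with h0 | h0
  · rw [← h0]; positivity
  have key : ‖y‖ * ‖y‖ ≤ (C * ‖x‖) * ‖y‖ := by
    calc ‖y‖ * ‖y‖ = inner ℝ y y := (real_inner_self_eq_norm_mul_norm y).symm
      _ = inner ℝ x (toEuclideanLin M y) := by rw [hy, aux_inner_transpose]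
      _ ≤ ‖x‖ * ‖toEuclideanLin M y‖ := real_inner_le_norm _ _
      _ ≤ ‖x‖ * (C * ‖y‖) := by
          apply mul_le_mul_of_nonneg_left (h y) (norm_nonneg x)
      _ = (C * ‖x‖) * ‖y‖ := by ring
  exact le_of_mul_le_mul_right key h0

/-- Cauchy–Schwarz-type bound for a symmetric PSD bilinear form bounded by `amax‖·‖²`. -/
lemma aux_cs (a : Matrix (Fin 2) (Fin 2) ℝ) (amax : ℝ) (hamax : 0 ≤ amax)
    (hsym : ∀ x y : E2, (inner ℝ x (toEuclideanLin a y) : ℝ) = inner ℝ y (toEuclideanLin a x))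
    (hnn : ∀ x : E2, 0 ≤ (inner ℝ x (toEuclideanLin a x) : ℝ))
    (hub : ∀ x : E2, (inner ℝ x (toEuclideanLin a x) : ℝ) ≤ amax * ‖x‖ ^ 2) :
    ∀ x y : E2, |(inner ℝ x (toEuclideanLin a y) : ℝ)| ≤ amax * ‖x‖ * ‖y‖ := by
  set b : E2 → E2 → ℝ := fun x y => inner ℝ x (toEuclideanLin a y) with hb
  have hbil : ∀ x y : E2, b (x + y) (x + y) = b x x + 2 * b x y + b y y := by
    intro x y
    simp only [hb, map_add, inner_add_left, inner_add_right]
    rw [hsym y x]; ring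
  have hpolar : ∀ x y : E2, b x y = (b (x + y) (x + y) - b (x - y) (x - y)) / 4 := by
    intro x y
    have h1 := hbil x y
    have h2 : b (x - y) (x - y) = b x x - 2 * b x y + b y y := by
      have := hbil x (-y)
      simp only [hb, map_neg, inner_neg_left, inner_neg_right] at this ⊢
      rw [sub_eq_add_neg]
      convert this using 1 <;> ring_nf
    linarith
  -- step 1: |b x y| ≤ amax/2 (‖x‖² + ‖y‖²)
  have step1 : ∀ x y : E2, |b x y| ≤ amax / 2 * (‖x‖ ^ 2 + ‖y‖ ^ 2) := by
    intro x y
    have hpar : ‖x + y‖ ^ 2 + ‖x - y‖ ^ 2 = 2 * (‖x‖ ^ 2 + ‖y‖ ^ 2) := by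
      have := parallelogram_law_with_norm ℝ x y
      nlinarith [this]
    rw [abs_le]
    constructor
    · have h1 := hub (x - y)
      have h2 := hnn (x + y)
      have h3 := hpolar x y
      nlinarith [sq_nonneg ‖x + y‖, mul_nonneg hamax (sq_nonneg ‖x + y‖)]
    · have h1 := hub (x + y)
      have h2 := hnn (x - y)
      have h3 := hpolar x y
      nlinarith [mul_nonneg hamax (sq_nonneg ‖x - y‖)]
  -- step 2: homogenize
  intro x y
  rcases eq_or_ne x 0 with hx | hx
  · subst hx; simp [hb]
  rcases eq_or_ne y 0 with hy | hy
  · subst hy; simp [hb]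
  have hnx : (0:ℝ) < ‖x‖ := norm_pos_iff.mpr hx
  have hny : (0:ℝ) < ‖y‖ := norm_pos_iff.mpr hy
  set lam := Real.sqrt (‖y‖ / ‖x‖) with hlam
  have hlampos : 0 < lam := Real.sqrt_pos.mpr (by positivity)
  have hs : b (lam • x) (lam⁻¹ • y) = b x y := by
    simp only [hb, real_inner_smul_left, LinearMap.map_smul, inner_smul_right]
    rw [← mul_assoc, mul_inv_cancel₀ (ne_of_gt hlampos), one_mul]
  have h1 := step1 (lam • x) (lam⁻¹ • y)
  rw [hs] at h1
  have hnlx : ‖lam • x‖ ^ 2 = ‖x‖ * ‖y‖ := by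
    rw [norm_smul, Real.norm_eq_abs, abs_of_pos hlampos, mul_pow, hlam,
      Real.sq_sqrt (by positivity)]
    field_simp
  have hnly : ‖lam⁻¹ • y‖ ^ 2 = ‖x‖ * ‖y‖ := by
    rw [norm_smul, Real.norm_eq_abs, abs_of_pos (by positivity), mul_pow, hlam, ← Real.sqrt_inv,
      Real.sq_sqrt (by positivity)]
    field_simp
  rw [hnlx, hnly] at h1
  calc |b x y| ≤ amax / 2 * (‖x‖ * ‖y‖ + ‖x‖ * ‖y‖) := h1
    _ = amax * ‖x‖ * ‖y‖ := by ring
lemma aux_low (ρ ρ' κ κ' am d n Q : ℝ) (hρ : 0 < ρ) (hρ' : 0 < ρ') (hκ : 0 < κ)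
    (hκ' : 0 < κ') (ham : 0 ≤ am) (hd : 0 < d) (hdle : d ≤ 2 * (κ / (2 * ρ')) ^ 2)
    (hQ0 : 0 ≤ Q) (hQ : am * (n / (κ' / (2 * ρ))) ^ 2 ≤ Q) :
    am * ((ρ * ρ') / (κ * κ')) ^ 2 * n ^ 2 ≤ d⁻¹ * Q := by
  have h1 : (2 * (κ / (2 * ρ')) ^ 2)⁻¹ ≤ d⁻¹ := inv_anti₀ hd hdle
  calc am * ((ρ * ρ') / (κ * κ')) ^ 2 * n ^ 2
      ≤ (2 * (κ / (2 * ρ')) ^ 2)⁻¹ * (am * (n / (κ' / (2 * ρ))) ^ 2) := by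
        have e : (2 * (κ / (2 * ρ')) ^ 2)⁻¹ * (am * (n / (κ' / (2 * ρ))) ^ 2)
            = 8 * (am * ((ρ * ρ') / (κ * κ')) ^ 2 * n ^ 2) := by
          rw [div_pow, div_pow, div_pow, div_pow]
          field_simp
          ring
        rw [e]
        nlinarith [mul_nonneg (mul_nonneg ham (sq_nonneg ((ρ * ρ') / (κ * κ')))) (sq_nonneg n)]
    _ ≤ d⁻¹ * Q := mul_le_mul h1 hQ (by positivity) (by positivity)

end helpers

/-- pointwise content of Lemma 3.1 with geometric constants:
continuity and coercivity bounds for the transformed coefficient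
`A = |det J|⁻¹ J a Jᵀ` of the affine map `φ(x) = J(x − r) + s`, in terms of the
inscribed radii `ρ, ρ'` and diameters `κ, κ'` of `T = φ(T')` and `T'`. -/
theorem transformed_coefficient_geometric_bounds
    (J : Matrix (Fin 2) (Fin 2) ℝ) (hJ : IsUnit J.det)
    (r s : EuclideanSpace ℝ (Fin 2))
    (φ : EuclideanSpace ℝ (Fin 2) → EuclideanSpace ℝ (Fin 2))
    (hφ : φ = fun x => Matrix.toEuclideanLin J (x - r) + s)
    (T' : Set (EuclideanSpace ℝ (Fin 2))) (hT'meas : MeasurableSet T')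
    (T : Set (EuclideanSpace ℝ (Fin 2))) (hT : T = φ '' T')
    (ρ ρ' κ κ' : ℝ) (hρ : 0 < ρ) (hρ' : 0 < ρ') (hκ : 0 < κ) (hκ' : 0 < κ')
    (hballT : ∃ c : EuclideanSpace ℝ (Fin 2), Metric.closedBall c ρ ⊆ T)
    (hdiamT : EMetric.diam T ≤ ENNReal.ofReal κ)
    (hballT' : ∃ c' : EuclideanSpace ℝ (Fin 2), Metric.closedBall c' ρ' ⊆ T')
    (hdiamT' : EMetric.diam T' ≤ ENNReal.ofReal κ')
    (a : Matrix (Fin 2) (Fin 2) ℝ) (hsymm : a.IsSymm)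
    (a_min a_max : ℝ) (ha_min : 0 ≤ a_min) (ha : a_min ≤ a_max)
    (hlb : ∀ x : EuclideanSpace ℝ (Fin 2), a_min * ‖x‖ ^ 2 ≤ matQuad a x x)
    (hub : ∀ x : EuclideanSpace ℝ (Fin 2), matQuad a x x ≤ a_max * ‖x‖ ^ 2)
    (A : Matrix (Fin 2) (Fin 2) ℝ) (hA : A = |J.det|⁻¹ • (J * a * Jᵀ)) :
    ∀ v w : EuclideanSpace ℝ (Fin 2),
      |matQuad A v w| ≤ a_max * ((κ * κ') / (ρ * ρ')) ^ 2 * ‖v‖ * ‖w‖ ∧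
      a_min * ((ρ * ρ') / (κ * κ')) ^ 2 * ‖v‖ ^ 2 ≤ matQuad A v v := by
  simp only [matQuad] at hlb hub
  obtain ⟨c, hc⟩ := hballT
  obtain ⟨c', hc'⟩ := hballT'
  have ha_max : (0:ℝ) ≤ a_max := le_trans ha_min ha
  -- forward norm bound for J
  have hfwd : ∀ x : EuclideanSpace ℝ (Fin 2),
      ‖toEuclideanLin J x‖ ≤ κ / (2 * ρ') * ‖x‖ := by
    apply aux_norm_bound (Matrix.toEuclideanLin J) (s - Matrix.toEuclideanLin J r) c' ρ' κ
      hρ' hκ.le T' T hc' _ hdiamT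
    intro x hx
    have he : Matrix.toEuclideanLin J x + (s - Matrix.toEuclideanLin J r)
        = Matrix.toEuclideanLin J (x - r) + s := by rw [map_sub]; abel
    rw [he, hT, hφ]
    exact ⟨x, hx, rfl⟩
  have hdet0 : J.det ≠ 0 := hJ.ne_zero
  have hdetpos : 0 < |J.det| := abs_pos.mpr hdet0
  have hJJ : ∀ z : EuclideanSpace ℝ (Fin 2),
      toEuclideanLin J⁻¹ (toEuclideanLin J z) = z := by
    intro z
    rw [← aux_mul_apply, Matrix.nonsing_inv_mul J hJ]
    simp [Matrix.toEuclideanLin_apply]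
  -- backward norm bound for J⁻¹
  have hbwd : ∀ x : EuclideanSpace ℝ (Fin 2),
      ‖toEuclideanLin J⁻¹ x‖ ≤ κ' / (2 * ρ) * ‖x‖ := by
    apply aux_norm_bound (toEuclideanLin J⁻¹) (r - toEuclideanLin J⁻¹ s) c ρ κ'
      hρ hκ'.le T T' hc _ hdiamT'
    intro y hy
    rw [hT, hφ] at hy
    obtain ⟨x, hx, rfl⟩ := hy
    refine Set.mem_of_eq_of_mem ?_ hx
    show toEuclideanLin J⁻¹ (toEuclideanLin J (x - r) + s)
        + (r - toEuclideanLin J⁻¹ s) = x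
    rw [map_add, hJJ]; abel
  have hC₁0 : (0:ℝ) < κ / (2 * ρ') := by positivity
  have hC₂0 : (0:ℝ) < κ' / (2 * ρ) := by positivity
  -- determinant bounds
  have hdet_le : |J.det| ≤ 2 * (κ / (2 * ρ')) ^ 2 := by
    rw [Matrix.det_fin_two]
    have h00 := aux_entry_le J _ hfwd 0 0
    have h01 := aux_entry_le J _ hfwd 0 1
    have h10 := aux_entry_le J _ hfwd 1 0
    have h11 := aux_entry_le J _ hfwd 1 1
    calc |J 0 0 * J 1 1 - J 0 1 * J 1 0| ≤ |J 0 0 * J 1 1| + |J 0 1 * J 1 0| :=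
          abs_sub _ _
      _ = |J 0 0| * |J 1 1| + |J 0 1| * |J 1 0| := by rw [abs_mul, abs_mul]
      _ ≤ (κ / (2 * ρ')) * (κ / (2 * ρ')) + (κ / (2 * ρ')) * (κ / (2 * ρ')) := by
          gcongr <;> first | exact abs_nonneg _ | assumption
      _ = 2 * (κ / (2 * ρ')) ^ 2 := by ring
  have hdetinv_le : |J.det|⁻¹ ≤ 2 * (κ' / (2 * ρ)) ^ 2 := by
    have h00 := aux_entry_le J⁻¹ _ hbwd 0 0
    have h01 := aux_entry_le J⁻¹ _ hbwd 0 1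
    have h10 := aux_entry_le J⁻¹ _ hbwd 1 0
    have h11 := aux_entry_le J⁻¹ _ hbwd 1 1
    have key : |J⁻¹.det| ≤ 2 * (κ' / (2 * ρ)) ^ 2 := by
      rw [Matrix.det_fin_two]
      calc |J⁻¹ 0 0 * J⁻¹ 1 1 - J⁻¹ 0 1 * J⁻¹ 1 0|
          ≤ |J⁻¹ 0 0 * J⁻¹ 1 1| + |J⁻¹ 0 1 * J⁻¹ 1 0| := abs_sub _ _
        _ = |J⁻¹ 0 0| * |J⁻¹ 1 1| + |J⁻¹ 0 1| * |J⁻¹ 1 0| := by rw [abs_mul, abs_mul]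
        _ ≤ (κ' / (2 * ρ)) * (κ' / (2 * ρ)) + (κ' / (2 * ρ)) * (κ' / (2 * ρ)) := by
            gcongr <;> first | exact abs_nonneg _ | assumption
        _ = 2 * (κ' / (2 * ρ)) ^ 2 := by ring
    rwa [Matrix.det_nonsing_inv, Ring.inverse_eq_inv', abs_inv] at key
  -- transpose bounds
  have hJT := aux_transpose_bound J _ hC₁0.le hfwd
  have hJiT := aux_transpose_bound J⁻¹ _ hC₂0.le hbwd
  have hlow : ∀ z : EuclideanSpace ℝ (Fin 2),
      ‖z‖ ≤ (κ' / (2 * ρ)) * ‖toEuclideanLin Jᵀ z‖ := by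
    intro z
    have h := hJiT (toEuclideanLin Jᵀ z)
    rw [← aux_mul_apply] at h
    have he : J⁻¹ᵀ * Jᵀ = 1 := by
      rw [← Matrix.transpose_mul, Matrix.mul_nonsing_inv J hJ, Matrix.transpose_one]
    rw [he] at h
    simpa [Matrix.toEuclideanLin_apply] using h
  -- symmetry and positivity of the form of `a`
  have hasym : ∀ x y : EuclideanSpace ℝ (Fin 2),
      (inner ℝ x (toEuclideanLin a y) : ℝ) = inner ℝ y (toEuclideanLin a x) := by
    intro x y
    rw [← aux_inner_transpose, hsymm.eq, real_inner_comm]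
  have hann : ∀ x : EuclideanSpace ℝ (Fin 2),
      0 ≤ (inner ℝ x (toEuclideanLin a x) : ℝ) :=
    fun x => le_trans (by positivity) (hlb x)
  have hcs := aux_cs a a_max ha_max hasym hann hub
  -- key identity
  have hquad : ∀ z₁ z₂ : EuclideanSpace ℝ (Fin 2), matQuad A z₁ z₂
      = |J.det|⁻¹ * inner ℝ (toEuclideanLin Jᵀ z₁)
          (toEuclideanLin a (toEuclideanLin Jᵀ z₂)) := by
    intro z₁ z₂
    simp only [matQuad, hA]
    rw [LinearEquiv.map_smul, LinearMap.smul_apply, real_inner_smul_right]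
    congr 1
    rw [aux_mul_apply, aux_mul_apply, ← aux_inner_transpose]
  intro v w
  constructor
  · -- continuity bound
    rw [hquad v w, abs_mul, abs_inv, abs_abs]
    calc |J.det|⁻¹ * |(inner ℝ (toEuclideanLin Jᵀ v)
            (toEuclideanLin a (toEuclideanLin Jᵀ w)) : ℝ)|
        ≤ (2 * (κ' / (2 * ρ)) ^ 2) *
            (a_max * ((κ / (2 * ρ')) * ‖v‖) * ((κ / (2 * ρ')) * ‖w‖)) := by
          apply mul_le_mul hdetinv_le ?_ (abs_nonneg _) (by positivity)
          calc |(inner ℝ (toEuclideanLin Jᵀ v)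
                  (toEuclideanLin a (toEuclideanLin Jᵀ w)) : ℝ)|
              ≤ a_max * ‖toEuclideanLin Jᵀ v‖ * ‖toEuclideanLin Jᵀ w‖ := hcs _ _
            _ ≤ a_max * ((κ / (2 * ρ')) * ‖v‖) * ((κ / (2 * ρ')) * ‖w‖) := by
                gcongr
                · exact hJT v
                · exact hJT w
      _ ≤ a_max * ((κ * κ') / (ρ * ρ')) ^ 2 * ‖v‖ * ‖w‖ := by
          have e1 : (2 * (κ' / (2 * ρ)) ^ 2) *
              (a_max * ((κ / (2 * ρ')) * ‖v‖) * ((κ / (2 * ρ')) * ‖w‖))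
              = (2 * (κ / (2 * ρ')) ^ 2 * (κ' / (2 * ρ)) ^ 2) * (a_max * (‖v‖ * ‖w‖)) := by
            ring
          have e2 : a_max * ((κ * κ') / (ρ * ρ')) ^ 2 * ‖v‖ * ‖w‖
              = ((κ * κ') / (ρ * ρ')) ^ 2 * (a_max * (‖v‖ * ‖w‖)) := by ring
          rw [e1, e2]
          apply mul_le_mul_of_nonneg_right ?_ (by positivity)
          have e3 : 2 * (κ / (2 * ρ')) ^ 2 * (κ' / (2 * ρ)) ^ 2
              = ((κ * κ') / (ρ * ρ')) ^ 2 / 8 := by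
            field_simp; ring
          rw [e3]
          nlinarith [sq_nonneg ((κ * κ') / (ρ * ρ'))]
  · -- coercivity bound
    rw [hquad v v]
    have h1 : ‖v‖ / (κ' / (2 * ρ)) ≤ ‖toEuclideanLin Jᵀ v‖ := by
      rw [div_le_iff₀ hC₂0]
      calc ‖v‖ ≤ (κ' / (2 * ρ)) * ‖toEuclideanLin Jᵀ v‖ := hlow v
        _ = ‖toEuclideanLin Jᵀ v‖ * (κ' / (2 * ρ)) := by ring
    have hin : a_min * (‖v‖ / (κ' / (2 * ρ))) ^ 2
        ≤ (inner ℝ (toEuclideanLin Jᵀ v) (toEuclideanLin a (toEuclideanLin Jᵀ v)) : ℝ) := by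
      calc a_min * (‖v‖ / (κ' / (2 * ρ))) ^ 2 ≤ a_min * ‖toEuclideanLin Jᵀ v‖ ^ 2 := by
            apply mul_le_mul_of_nonneg_left
              (pow_le_pow_left₀ (by positivity) h1 2) ha_min
        _ ≤ _ := hlb _
    exact aux_low ρ ρ' κ κ' a_min |J.det| ‖v‖ _ hρ hρ' hκ hκ' ha_min hdetpos hdet_le
      (hann _) hin
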